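/- Let x > 0 and y ≠ 0 be real numbers, and define d_{x,y}(n) = n · ( y/sin(y·ln((n+1)/n)) − y/((1 + 1/n)^{x} · tan(y·ln((n+2)/(n+1)))) + (1−x)/(1 + 1/n)^{x} ). Then d_{x,y}(n) converges, as the natural number n → ∞, to (x² + y²)/2. -/

import Mathlib

set_option maxHeartbeats 1000000
open Filter Real

local notation "lf" => nhdsWithin (0:ℝ) (Set.Ioi (0:ℝ))

private lemma hpos : ∀ᶠ t in lf, 0 < t := eventually_mem_nhdsWithin

private lemma hid : Tendsto (fun t : ℝ => t) lf (nhds 0) :=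
  tendsto_id.mono_right nhdsWithin_le_nhds

private lemma hpoly (a b c : ℝ) : Tendsto (fun t : ℝ => a + b*t + c*t^2) lf (nhds a) := by
  have hc : Continuous fun t : ℝ => a + b*t + c*t^2 := by continuity
  have h2 : Tendsto (fun t : ℝ => a + b*t + c*t^2) lf (nhds (a + b*0 + c*0^2)) :=
    (hc.tendsto 0).mono_left nhdsWithin_le_nhds
  simpa using h2

private lemma tendsto_of_E2 {f : ℝ → ℝ} {a b c : ℝ}
    (h : Tendsto (fun t => (f t - (a + b*t + c*t^2))/t^2) lf (nhds 0)) :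
    Tendsto f lf (nhds a) := by
  have h2 : Tendsto (fun t : ℝ => ((f t - (a + b*t + c*t^2))/t^2) * t^2 + (a + b*t + c*t^2))
      lf (nhds (0 * 0^2 + a)) := (h.mul (hid.pow 2)).add (hpoly a b c)
  have h3 : Tendsto f lf (nhds (0 * 0^2 + a)) := by
    apply h2.congr'
    filter_upwards [hpos] with t ht
    field_simp
    ring
  simpa using h3

private lemma E2_mul {f g : ℝ → ℝ} {a₀ a₁ a₂ b₀ b₁ b₂ : ℝ}
    (hf : Tendsto (fun t => (f t - (a₀ + a₁*t + a₂*t^2))/t^2) lf (nhds 0))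
    (hg : Tendsto (fun t => (g t - (b₀ + b₁*t + b₂*t^2))/t^2) lf (nhds 0)) :
    Tendsto (fun t => (f t * g t -
      (a₀*b₀ + (a₀*b₁+a₁*b₀)*t + (a₀*b₂+a₁*b₁+a₂*b₀)*t^2))/t^2) lf (nhds 0) := by
  have hg0 : Tendsto g lf (nhds b₀) := tendsto_of_E2 hg
  have h2 : Tendsto (fun t : ℝ =>
      ((f t - (a₀ + a₁*t + a₂*t^2))/t^2) * g t
      + (a₀ + a₁*t + a₂*t^2) * ((g t - (b₀ + b₁*t + b₂*t^2))/t^2)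
      + ((a₁*b₂+a₂*b₁)*t + a₂*b₂*t^2))
      lf (nhds (0 * b₀ + a₀ * 0 + 0)) := by
    refine ((hf.mul hg0).add ((hpoly a₀ a₁ a₂).mul hg)).add ?_
    simpa using (hpoly 0 (a₁*b₂+a₂*b₁) (a₂*b₂))
  have h3 : Tendsto (fun t => (f t * g t -
      (a₀*b₀ + (a₀*b₁+a₁*b₀)*t + (a₀*b₂+a₁*b₁+a₂*b₀)*t^2))/t^2) lf
      (nhds (0 * b₀ + a₀ * 0 + 0)) := by
    apply h2.congr'
    filter_upwards [hpos] with t ht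
    field_simp
    ring
  simpa using h3

private lemma E2_inv {S : ℝ → ℝ} {a b : ℝ}
    (h : Tendsto (fun t => (S t - (1 + a*t + b*t^2))/t^2) lf (nhds 0)) :
    Tendsto (fun t => (1/S t - (1 + (-a)*t + (a^2-b)*t^2))/t^2) lf (nhds 0) := by
  have hS0 : Tendsto S lf (nhds 1) := tendsto_of_E2 h
  have hne : ∀ᶠ t in lf, (0:ℝ) < S t := hS0.eventually_const_lt (by norm_num)
  have hinv : Tendsto (fun t => 1 / S t) lf (nhds 1) := by
    have := (tendsto_const_nhds (x := (1:ℝ))).div hS0 one_ne_zero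
    norm_num at this
    exact this
  have h2 : Tendsto (fun t : ℝ =>
      (-(((S t - (1 + a*t + b*t^2))/t^2) * (1 + (-a)*t + (a^2-b)*t^2))
        + (-((a^3-2*a*b)*t) + -((b*(a^2-b))*t^2))) * (1/S t))
      lf (nhds ((-(0*1) + 0) * 1)) := by
    refine Tendsto.mul ?_ hinv
    refine Tendsto.add ?_ ?_
    · exact (h.mul (hpoly 1 (-a) (a^2-b))).neg
    · simpa using hpoly 0 (-(a^3-2*a*b)) (-(b*(a^2-b)))
  have h3 : Tendsto (fun t => (1/S t - (1 + (-a)*t + (a^2-b)*t^2))/t^2) lf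
      (nhds ((-(0*1) + 0) * 1)) := by
    apply h2.congr'
    filter_upwards [hpos, hne] with t ht hS
    field_simp
    ring
  simpa using h3

private lemma hlog (c : ℝ) :
    Tendsto (fun t => (Real.log (1+c*t) - (c*t - c^2*t^2/2 + c^3*t^3/3))/t^3) lf (nhds 0) := by
  have habs : Tendsto (fun t : ℝ => |c*t|) lf (nhds 0) := by
    have := (hid.const_mul c).abs
    simpa using this
  have hev : ∀ᶠ t in lf, |c*t| ≤ 1/2 :=
    (habs.eventually_lt_const (by norm_num : (0:ℝ) < 1/2)).mono
      (fun t ht => le_of_lt ht)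
  apply squeeze_zero_norm' (a := fun t => (2*c^4)*t)
  · filter_upwards [hpos, hev] with t ht h2
    have h1 : |(-(c*t))| < 1 := by rw [abs_neg]; linarith [abs_nonneg (c*t)]
    have key := Real.abs_log_sub_add_sum_range_le h1 3
    simp only [Finset.sum_range_succ, Finset.sum_range_zero] at key
    push_cast at key
    norm_num at key
    have heq : -(c*t) + (c*t)^2/2 + (-(c*t))^3/3 + Real.log (1+c*t)
        = Real.log (1+c*t) - (c*t - c^2*t^2/2 + c^3*t^3/3) := by ring
    rw [heq] at key
    have h3 : |c*t| ^ 4 = c^4*t^4 := by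
      rw [← abs_pow, abs_of_nonneg (by positivity)]
      ring
    have h4 : (1:ℝ)/2 ≤ 1 - |c*t| := by linarith
    have hb : |c*t| ^ 4 / (1 - |c*t|) ≤ 2*c^4*t^4 := by
      calc |c*t| ^ 4 / (1 - |c*t|) ≤ |c*t|^4 / (1/2) :=
            div_le_div_of_nonneg_left (by positivity) (by norm_num) h4
        _ = 2*c^4*t^4 := by rw [h3]; ring
    have hA : |Real.log (1+c*t) - (c*t - c^2*t^2/2 + c^3*t^3/3)| ≤ 2*c^4*t^4 :=
      by rw [abs_mul] at hb; exact le_trans key hb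
    rw [Real.norm_eq_abs, abs_div, abs_of_nonneg (by positivity : (0:ℝ) ≤ t^3)]
    rw [div_le_iff₀ (by positivity)]
    calc |Real.log (1+c*t) - (c*t - c^2*t^2/2 + c^3*t^3/3)| ≤ 2*c^4*t^4 := hA
      _ = 2*c^4*t*t^3 := by ring
  · have := hid.const_mul (2*c^4)
    simpa using this

private lemma udiv {u : ℝ → ℝ} {a b c : ℝ}
    (h : Tendsto (fun t => (u t - (a*t + b*t^2 + c*t^3))/t^3) lf (nhds 0)) :
    Tendsto (fun t => u t / t) lf (nhds a) := by
  have h2 : Tendsto (fun t : ℝ => ((u t - (a*t+b*t^2+c*t^3))/t^3)*t^2 + (a + b*t + c*t^2))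
      lf (nhds (0*0^2 + a)) := (h.mul (hid.pow 2)).add (hpoly a b c)
  have h3 : Tendsto (fun t => u t / t) lf (nhds (0*0^2+a)) := by
    apply h2.congr'
    filter_upwards [hpos] with t ht
    field_simp
    ring
  simpa using h3

private lemma uzero {u : ℝ → ℝ} {a b c : ℝ}
    (h : Tendsto (fun t => (u t - (a*t + b*t^2 + c*t^3))/t^3) lf (nhds 0)) :
    Tendsto u lf (nhds 0) := by
  have h2 : Tendsto (fun t => (u t / t) * t) lf (nhds (a * 0)) := (udiv h).mul hid
  have h3 : Tendsto u lf (nhds (a*0)) := by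
    apply h2.congr'
    filter_upwards [hpos] with t ht
    field_simp
  simpa using h3

private lemma usmall {u : ℝ → ℝ} {a b c : ℝ}
    (h : Tendsto (fun t => (u t - (a*t + b*t^2 + c*t^3))/t^3) lf (nhds 0)) :
    ∀ᶠ t in lf, |u t| ≤ 1 ∧ |u t| ≤ (|a|+1)*t := by
  have hb1 : ∀ᶠ t in lf, |u t| ≤ 1 := by
    have := (uzero h).abs
    simp only [abs_zero] at this
    exact (this.eventually_lt_const (by norm_num : (0:ℝ) < 1)).mono (fun t ht => le_of_lt ht)
  have hb2 : ∀ᶠ t in lf, |u t| ≤ (|a|+1)*t := by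
    have habs := (udiv h).abs
    have hlt := habs.eventually_lt_const (lt_add_one |a|)
    filter_upwards [hpos, hlt] with t ht h2
    have h3 : |u t| / t < |a| + 1 := by
      rwa [abs_div, abs_of_pos ht] at h2
    exact le_of_lt ((div_lt_iff₀ ht).mp h3)
  exact hb1.and hb2

private lemma hsin {u : ℝ → ℝ} {a b c : ℝ}
    (h : Tendsto (fun t => (u t - (a*t + b*t^2 + c*t^3))/t^3) lf (nhds 0)) :
    Tendsto (fun t => (Real.sin (u t) - (a*t + b*t^2 + (c - a^3/6)*t^3))/t^3) lf (nhds 0) := by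
  have hu1 := udiv h
  have hR : Tendsto (fun t => (Real.sin (u t) - (u t - (u t)^3/6))/t^3) lf (nhds 0) := by
    apply squeeze_zero_norm' (a := fun t => (|a|+1)^4 * t)
    · filter_upwards [hpos, usmall h] with t ht hu
      have key := Real.sin_bound hu.1
      have h4 : |u t|^4 ≤ ((|a|+1)*t)^4 := by
        apply pow_le_pow_left₀ (abs_nonneg _) hu.2
      rw [Real.norm_eq_abs, abs_div, abs_of_nonneg (by positivity : (0:ℝ) ≤ t^3),
        div_le_iff₀ (by positivity)]
      calc |Real.sin (u t) - (u t - (u t)^3/6)| ≤ |u t|^4 * (5/96) := by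
            have h6 : (0:ℝ) ≤ |u t|^4 := by positivity
            nlinarith [key, mul_le_mul_of_nonneg_left hu.1 h6]
        _ ≤ ((|a|+1)*t)^4 * 1 := by
            apply mul_le_mul h4 (by norm_num) (by norm_num) (by positivity)
        _ = ((|a|+1)^4 * t) * t^3 := by ring
    · have := hid.const_mul ((|a|+1)^4)
      simpa using this
  have hcube : Tendsto (fun t => ((u t)^3 - a^3*t^3)/t^3) lf (nhds 0) := by
    have h2 : Tendsto (fun t => (u t / t)^3 - a^3) lf (nhds (a^3 - a^3)) :=
      (hu1.pow 3).sub tendsto_const_nhds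
    have h3 : Tendsto (fun t => ((u t)^3 - a^3*t^3)/t^3) lf (nhds (a^3 - a^3)) := by
      apply h2.congr'
      filter_upwards [hpos] with t ht
      field_simp
    simpa using h3
  have hsum : Tendsto (fun t =>
      ((Real.sin (u t) - (u t - (u t)^3/6))/t^3)
      + ((u t - (a*t + b*t^2 + c*t^3))/t^3)
      - (((u t)^3 - a^3*t^3)/t^3)/6) lf (nhds (0 + 0 - 0/6)) :=
    (hR.add h).sub (hcube.div_const 6)
  have h3 : Tendsto (fun t => (Real.sin (u t) - (a*t + b*t^2 + (c - a^3/6)*t^3))/t^3)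
      lf (nhds (0 + 0 - 0/6)) := by
    apply hsum.congr'
    filter_upwards [hpos] with t ht
    field_simp
    ring
  simpa using h3

private lemma hcosl {u : ℝ → ℝ} {a b c : ℝ}
    (h : Tendsto (fun t => (u t - (a*t + b*t^2 + c*t^3))/t^3) lf (nhds 0)) :
    Tendsto (fun t => (Real.cos (u t) - (1 - a^2*t^2/2))/t^2) lf (nhds 0) := by
  have hu1 := udiv h
  have hR : Tendsto (fun t => (Real.cos (u t) - (1 - (u t)^2/2))/t^2) lf (nhds 0) := by
    apply squeeze_zero_norm' (a := fun t => (|a|+1)^4 * t^2)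
    · filter_upwards [hpos, usmall h] with t ht hu
      have key := Real.cos_bound hu.1
      have h4 : |u t|^4 ≤ ((|a|+1)*t)^4 := pow_le_pow_left₀ (abs_nonneg _) hu.2 4
      rw [Real.norm_eq_abs, abs_div, abs_of_nonneg (by positivity : (0:ℝ) ≤ t^2),
        div_le_iff₀ (by positivity)]
      calc |Real.cos (u t) - (1 - (u t)^2/2)| ≤ |u t|^4 * (5/96) := key
        _ ≤ ((|a|+1)*t)^4 * 1 := by
            apply mul_le_mul h4 (by norm_num) (by norm_num) (by positivity)
        _ ≤ ((|a|+1)^4 * t^2) * t^2 := by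
            have h5 : (0:ℝ) ≤ (|a|+1) := by positivity
            nlinarith [sq_nonneg t, sq_nonneg ((|a|+1)*t)]
    · have := (hid.pow 2).const_mul ((|a|+1)^4)
      simpa using this
  have hsq : Tendsto (fun t => ((u t)^2 - a^2*t^2)/t^2) lf (nhds 0) := by
    have h2 : Tendsto (fun t => (u t / t)^2 - a^2) lf (nhds (a^2 - a^2)) :=
      (hu1.pow 2).sub tendsto_const_nhds
    have h3 : Tendsto (fun t => ((u t)^2 - a^2*t^2)/t^2) lf (nhds (a^2 - a^2)) := by
      apply h2.congr'
      filter_upwards [hpos] with t ht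
      field_simp
    simpa using h3
  have hsum : Tendsto (fun t =>
      ((Real.cos (u t) - (1 - (u t)^2/2))/t^2) - (((u t)^2 - a^2*t^2)/t^2)/2)
      lf (nhds (0 - 0/2)) := hR.sub (hsq.div_const 2)
  have h3 : Tendsto (fun t => (Real.cos (u t) - (1 - a^2*t^2/2))/t^2)
      lf (nhds (0 - 0/2)) := by
    apply hsum.congr'
    filter_upwards [hpos] with t ht
    field_simp
    ring
  simpa using h3

private lemma hQl (x : ℝ) :
    Tendsto (fun t => (1/(1+t)^x - (1 - x*t + ((x^2+x)/2)*t^2))/t^2) lf (nhds 0) := by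
  set L : ℝ → ℝ := fun t => Real.log (1+t) with hLdef
  set z : ℝ → ℝ := fun t => -(x * L t) with hzdef
  have hz3 : Tendsto (fun t => (z t - ((-x)*t + (x/2)*t^2 + (-(x/3))*t^3))/t^3) lf (nhds 0) := by
    have h1 := (hlog 1).const_mul (-x)
    simp only [mul_zero] at h1
    apply h1.congr
    intro t
    simp only [hzdef, hLdef]
    ring_nf
  have hz1 : Tendsto (fun t => z t / t) lf (nhds (-x)) := udiv hz3
  have hE : Tendsto (fun t => (Real.exp (z t) - (1 + z t + (z t)^2/2))/t^2) lf (nhds 0) := by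
    apply squeeze_zero_norm' (a := fun t => (|(-x)|+1)^3 * t)
    · filter_upwards [hpos, usmall hz3] with t ht hu
      have key := Real.exp_bound hu.1 (by norm_num : 0 < 3)
      have hsum : ∑ m ∈ Finset.range 3, (z t)^m / (m.factorial : ℝ)
          = 1 + z t + (z t)^2/2 := by
        simp [Finset.sum_range_succ, Nat.factorial]
      rw [hsum] at key
      have h4 : |z t|^3 ≤ ((|(-x)|+1)*t)^3 := pow_le_pow_left₀ (abs_nonneg _) hu.2 3
      rw [Real.norm_eq_abs, abs_div, abs_of_nonneg (by positivity : (0:ℝ) ≤ t^2),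
        div_le_iff₀ (by positivity)]
      calc |Real.exp (z t) - (1 + z t + (z t)^2/2)|
          ≤ |z t|^3 * ((3:ℕ).succ / ((3:ℕ).factorial * 3)) := key
        _ ≤ ((|(-x)|+1)*t)^3 * 1 := by
            apply mul_le_mul h4 (by norm_num [Nat.factorial]) (by positivity) (by positivity)
        _ = ((|(-x)|+1)^3 * t) * t^2 := by ring
    · have := hid.const_mul ((|(-x)|+1)^3)
      simpa using this
  have hA : Tendsto (fun t => (z t - (-(x*t) + (x/2)*t^2))/t^2) lf (nhds 0) := by
    have h2 : Tendsto (fun t : ℝ => ((z t - ((-x)*t + (x/2)*t^2 + (-(x/3))*t^3))/t^3)*t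
        + (0 + (-(x/3))*t + 0*t^2)) lf (nhds (0*0 + 0)) :=
      (hz3.mul hid).add (hpoly 0 (-(x/3)) 0)
    have h3 : Tendsto (fun t => (z t - (-(x*t) + (x/2)*t^2))/t^2) lf (nhds (0*0+0)) := by
      apply h2.congr'
      filter_upwards [hpos] with t ht
      field_simp
      ring
    simpa using h3
  have hB : Tendsto (fun t => ((z t)^2 - x^2*t^2)/t^2) lf (nhds 0) := by
    have h2 : Tendsto (fun t => (z t / t)^2 - x^2) lf (nhds ((-x)^2 - x^2)) :=
      (hz1.pow 2).sub tendsto_const_nhds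
    have h3 : Tendsto (fun t => ((z t)^2 - x^2*t^2)/t^2) lf (nhds ((-x)^2 - x^2)) := by
      apply h2.congr'
      filter_upwards [hpos] with t ht
      field_simp
    simpa using h3
  have hsum : Tendsto (fun t =>
      ((Real.exp (z t) - (1 + z t + (z t)^2/2))/t^2)
      + ((z t - (-(x*t) + (x/2)*t^2))/t^2)
      + (((z t)^2 - x^2*t^2)/t^2)/2) lf (nhds (0 + 0 + 0/2)) :=
    (hE.add hA).add (hB.div_const 2)
  have h3 : Tendsto (fun t => (1/(1+t)^x - (1 - x*t + ((x^2+x)/2)*t^2))/t^2)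
      lf (nhds (0+0+0/2)) := by
    apply hsum.congr'
    filter_upwards [hpos] with t ht
    have h1t : (0:ℝ) < 1 + t := by linarith
    have hrw : 1/(1+t)^x = Real.exp (z t) := by
      rw [Real.rpow_def_of_pos h1t, one_div, ← Real.exp_neg]
      congr 1
      simp only [hzdef, hLdef]
      ring
    rw [← hrw]
    field_simp
    ring
  simpa using h3

private lemma gTendsto (x y : ℝ) (hy : y ≠ 0) :
    Tendsto (fun t : ℝ => (1/t) * (y / Real.sin (y * Real.log (1+t))
      - y / ((1+t)^x * Real.tan (y * Real.log ((1+2*t)/(1+t))))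
      + (1-x) / (1+t)^x)) lf (nhds ((x^2+y^2)/2)) := by
  set u : ℝ → ℝ := fun t => y * Real.log (1+t) with hudef
  set w : ℝ → ℝ := fun t => y * (Real.log (1+2*t) - Real.log (1+t)) with hwdef
  -- expansions of u and w
  have hu3 : Tendsto (fun t => (u t - (y*t + (-(y/2))*t^2 + (y/3)*t^3))/t^3) lf (nhds 0) := by
    have h1 := (hlog 1).const_mul y
    simp only [mul_zero] at h1
    apply h1.congr
    intro t
    simp only [hudef, one_mul, one_pow]
    ring
  have hw3 : Tendsto (fun t => (w t - (y*t + (-(3*y/2))*t^2 + (7*y/3)*t^3))/t^3) lf (nhds 0) := by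
    have h1 := ((hlog 2).sub (hlog 1)).const_mul y
    simp only [mul_zero, sub_zero] at h1
    apply h1.congr
    intro t
    simp only [hwdef, one_mul, one_pow]
    ring
  -- normalized sine quotients
  set S : ℝ → ℝ := fun t => Real.sin (u t) / (y*t) with hSdef
  set S₂ : ℝ → ℝ := fun t => Real.sin (w t) / (y*t) with hS2def
  have hS : Tendsto (fun t => (S t - (1 + (-(1/2))*t + (1/3 - y^2/6)*t^2))/t^2) lf (nhds 0) := by
    have h1 := (hsin hu3).div_const y
    simp only [zero_div] at h1
    apply h1.congr'
    filter_upwards [hpos] with t ht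
    simp only [hSdef]
    field_simp
  have hS2 : Tendsto (fun t => (S₂ t - (1 + (-(3/2))*t + (7/3 - y^2/6)*t^2))/t^2) lf (nhds 0) := by
    have h1 := (hsin hw3).div_const y
    simp only [zero_div] at h1
    apply h1.congr'
    filter_upwards [hpos] with t ht
    simp only [hS2def]
    field_simp
  have hcw : Tendsto (fun t => (Real.cos (w t) - (1 + 0*t + (-(y^2/2))*t^2))/t^2) lf (nhds 0) :=
    (hcosl hw3).congr (fun t => by ring)
  have hQ : Tendsto (fun t => (1/(1+t)^x - (1 + (-x)*t + ((x^2+x)/2)*t^2))/t^2) lf (nhds 0) :=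
    (hQl x).congr (fun t => by ring)
  -- inverses
  have hiS : Tendsto (fun t => (1/S t - (1 + (-(-(1/2)))*t + ((-(1/2))^2 - (1/3 - y^2/6))*t^2))/t^2)
      lf (nhds 0) := E2_inv hS
  have hiS2 : Tendsto (fun t => (1/S₂ t - (1 + (-(-(3/2)))*t + ((-(3/2))^2 - (7/3 - y^2/6))*t^2))/t^2)
      lf (nhds 0) := E2_inv hS2
  -- the product term
  have hQc : Tendsto (fun t => ((1/(1+t)^x) * Real.cos (w t) -
      (1*1 + (1*0 + (-x)*1)*t + (1*(-(y^2/2)) + (-x)*0 + ((x^2+x)/2)*1)*t^2))/t^2)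
      lf (nhds 0) := E2_mul hQ hcw
  have hF : Tendsto (fun t => (((1/(1+t)^x) * Real.cos (w t)) * (1/S₂ t) -
      ((1*1)*1 + ((1*1)*(-(-(3/2))) + (1*0 + (-x)*1)*1)*t +
        ((1*1)*((-(3/2))^2 - (7/3 - y^2/6)) + (1*0 + (-x)*1)*(-(-(3/2)))
          + (1*(-(y^2/2)) + (-x)*0 + ((x^2+x)/2)*1)*1)*t^2))/t^2)
      lf (nhds 0) := E2_mul hQc hiS2
  -- the (1-x)/(1+t)^x term multiplied by t
  have hC : Tendsto (fun t => ((1-x)*(1/(1+t)^x)*t - ((1-x)*t + (-(x*(1-x)))*t^2))/t^2)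
      lf (nhds 0) := by
    have h2 : Tendsto (fun t : ℝ => ((1-x) * ((1/(1+t)^x - (1 + (-x)*t + ((x^2+x)/2)*t^2))/t^2))*t
        + (0 + ((1-x)*((x^2+x)/2))*t + 0*t^2)) lf (nhds ((1-x)*0*0 + 0)) :=
      ((hQ.const_mul (1-x)).mul hid).add (hpoly 0 ((1-x)*((x^2+x)/2)) 0)
    have h3 : Tendsto (fun t => ((1-x)*(1/(1+t)^x)*t - ((1-x)*t + (-(x*(1-x)))*t^2))/t^2)
        lf (nhds ((1-x)*0*0 + 0)) := by
      apply h2.congr'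
      filter_upwards [hpos] with t ht
      have hP : ((1:ℝ)+t)^x ≠ 0 := (Real.rpow_pos_of_pos (by linarith) x).ne'
      field_simp
      ring
    simpa using h3
  clear_value u w S S₂
  -- limits needed for nonvanishing
  have hS0 : Tendsto S lf (nhds 1) := tendsto_of_E2 hS
  have hS20 : Tendsto S₂ lf (nhds 1) := tendsto_of_E2 hS2
  have hcw0 : Tendsto (fun t => Real.cos (w t)) lf (nhds 1) := by
    have := (Real.continuous_cos.tendsto 0).comp (uzero hw3)
    rw [Real.cos_zero] at this; exact this
  have hSpos : ∀ᶠ t in lf, 0 < S t := hS0.eventually_const_lt (by norm_num)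
  have hS2pos : ∀ᶠ t in lf, 0 < S₂ t := hS20.eventually_const_lt (by norm_num)
  have hcwpos : ∀ᶠ t in lf, 0 < Real.cos (w t) := hcw0.eventually_const_lt (by norm_num)
  -- combine
  have hsum : Tendsto (fun t =>
      ((1/S t - (1 + (-(-(1/2)))*t + ((-(1/2))^2 - (1/3 - y^2/6))*t^2))/t^2
      - (((1/(1+t)^x) * Real.cos (w t)) * (1/S₂ t) -
      ((1*1)*1 + ((1*1)*(-(-(3/2))) + (1*0 + (-x)*1)*1)*t +
        ((1*1)*((-(3/2))^2 - (7/3 - y^2/6)) + (1*0 + (-x)*1)*(-(-(3/2)))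
          + (1*(-(y^2/2)) + (-x)*0 + ((x^2+x)/2)*1)*1)*t^2))/t^2
      + ((1-x)*(1/(1+t)^x)*t - ((1-x)*t + (-(x*(1-x)))*t^2))/t^2)
      + (x^2+y^2)/2) lf (nhds ((0 - 0 + 0) + (x^2+y^2)/2)) :=
    ((hiS.sub hF).add hC).add_const _
  have hmain : Tendsto (fun t : ℝ => (1/t) * (y / Real.sin (u t)
      - y / ((1+t)^x * Real.tan (w t))
      + (1-x) / (1+t)^x)) lf (nhds ((0 - 0 + 0) + (x^2+y^2)/2)) := by
    apply hsum.congr'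
    filter_upwards [hpos, hSpos, hS2pos, hcwpos] with t ht h1 h2 h3
    have h1t : (0:ℝ) < 1 + t := by linarith
    have hP : ((1:ℝ)+t)^x ≠ 0 := (Real.rpow_pos_of_pos h1t x).ne'
    have hsu : Real.sin (u t) = y * t * S t := by
      simp only [hSdef]
      field_simp
    have hsw : Real.sin (w t) = y * t * S₂ t := by
      simp only [hS2def]
      field_simp
    rw [hsu, Real.tan_eq_sin_div_cos, hsw]
    have e1 : y/(y*t*S t) = 1/(t*S t) := by
      have e : y*t*S t = y*(t*S t) := by ring
      rw [e, div_mul_eq_div_div, div_self hy]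
    have e2 : y/((1+t)^x * (y*t*S₂ t / Real.cos (w t)))
        = Real.cos (w t)/((1+t)^x * (t*S₂ t)) := by
      rw [div_eq_div_iff (by positivity) (by positivity)]
      field_simp
    rw [e1, e2]
    field_simp
    ring
  have heq : (fun t : ℝ => (1/t) * (y / Real.sin (u t)
      - y / ((1+t)^x * Real.tan (w t))
      + (1-x) / (1+t)^x)) =ᶠ[lf] (fun t : ℝ => (1/t) * (y / Real.sin (y * Real.log (1+t))
      - y / ((1+t)^x * Real.tan (y * Real.log ((1+2*t)/(1+t))))
      + (1-x) / (1+t)^x)) := by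
    filter_upwards [hpos] with t ht
    have h1t : (0:ℝ) < 1 + t := by linarith
    have h2t : (0:ℝ) < 1 + 2*t := by linarith
    have hlg : Real.log ((1+2*t)/(1+t)) = Real.log (1+2*t) - Real.log (1+t) :=
      Real.log_div h2t.ne' h1t.ne'
    rw [hlg, hudef, hwdef]
  have hfin := hmain.congr' heq
  norm_num at hfin
  simpa [one_div] using hfin

/-- The control function of the paper:
`d_{x,y}(n) = n·(y/sin(y·ln((n+1)/n)) − y/((1+1/n)^x·tan(y·ln((n+2)/(n+1)))) + (1−x)/(1+1/n)^x)`. -/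
noncomputable def dFun (x y : ℝ) (n : ℕ) : ℝ :=
  (n : ℝ) *
    (y / Real.sin (y * Real.log (((n : ℝ) + 1) / (n : ℝ))) -
      y / ((1 + 1 / (n : ℝ)) ^ x *
        Real.tan (y * Real.log (((n : ℝ) + 2) / ((n : ℝ) + 1)))) +
      (1 - x) / (1 + 1 / (n : ℝ)) ^ x)

/-- For `x > 0` and `y ≠ 0`, `d_{x,y}(n)` converges to `(x² + y²)/2` as `n → ∞`. -/
theorem dFun_tendsto (x y : ℝ) (hx : 0 < x) (hy : y ≠ 0) :
    Tendsto (fun n : ℕ => dFun x y n) atTop (nhds ((x ^ 2 + y ^ 2) / 2)) := by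
  have h1 : Tendsto (fun n : ℕ => 1/(n:ℝ)) atTop lf := by
    rw [tendsto_nhdsWithin_iff]
    refine ⟨tendsto_one_div_atTop_nhds_zero_nat, ?_⟩
    filter_upwards [eventually_ge_atTop 1] with n hn
    have : (0:ℝ) < n := by exact_mod_cast Nat.lt_of_lt_of_le Nat.zero_lt_one hn
    exact Set.mem_Ioi.mpr (by positivity)
  have h2 := (gTendsto x y hy).comp h1
  apply h2.congr'
  filter_upwards [eventually_ge_atTop 1] with n hn
  have hn0 : (0:ℝ) < n := by exact_mod_cast Nat.lt_of_lt_of_le Nat.zero_lt_one hn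
  have e0 : 1/(1/(n:ℝ)) = (n:ℝ) := one_div_one_div _
  have e1 : 1 + 1/(n:ℝ) = ((n:ℝ)+1)/(n:ℝ) := by field_simp
  have e2 : (1 + 2*(1/(n:ℝ)))/(1 + 1/(n:ℝ)) = ((n:ℝ)+2)/((n:ℝ)+1) := by
    rw [div_eq_div_iff]
    · field_simp
    · positivity
    · positivity
  simp only [Function.comp_apply, dFun]
  rw [e0, e2, e1]
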